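/- The decycling number of the Cartesian product C₄ □ C₄ equals 6: ∇(C₄ □ C₄) = 6. -/

import Mathlib

open SimpleGraph

/-- `S` is a decycling set of `G` if the subgraph of `G` induced on the complement of `S`
is acyclic. -/
def SimpleGraph.IsDecyclingSet {V : Type*} (G : SimpleGraph V) (S : Set V) : Prop :=
  (G.induce Sᶜ).IsAcyclic

/-- The decycling number `∇(G)` of `G`: the minimum cardinality of a decycling set of `G`. -/
noncomputable def SimpleGraph.decyclingNumber {V : Type*} (G : SimpleGraph V) : ℕ :=
  sInf {k | ∃ S : Set V, G.IsDecyclingSet S ∧ S.ncard = k}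

open Finset in
private lemma getVert_one_ne_end {V : Type*} {G : SimpleGraph V} {v x : V} {q : G.Walk v x}
    (hq : q.IsPath) (hlen : 2 ≤ q.length) : q.getVert 1 ≠ x := by
  intro heq
  have hnn : ¬ q.Nil := (SimpleGraph.Walk.not_nil_iff_lt_length).mpr (by omega)
  have ht : q.tail.IsPath := by
    have := hq
    rw [← q.cons_tail_eq hnn] at this
    exact this.of_cons
  have ht' : q.tail.copy heq rfl = Walk.nil := by
    rw [← Walk.isPath_iff_eq_nil, Walk.isPath_copy]
    exact ht
  have hlen' : (q.tail.copy heq rfl).length = q.length - 1 := by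
    have := q.length_tail_add_one hnn
    simp only [SimpleGraph.Walk.length_copy]
    omega
  rw [ht'] at hlen'
  simp at hlen'
  omega

private lemma getVert_one_mem_support {V : Type*} {G : SimpleGraph V} {v x : V}
    (q : G.Walk v x) : q.getVert 1 ∈ q.support := by
  by_cases hnn : q.Nil
  · cases hnn with
    | nil => simp [Walk.getVert]
  · have h2 : q.support = v :: q.tail.support := by
      rw [← Walk.support_cons (Walk.adj_snd hnn) q.tail, q.cons_tail_eq hnn]
    rw [h2]
    exact List.mem_cons_of_mem _ (Walk.start_mem_support _)

open Finset in
/-- Certificate for acyclicity: an ordering of the vertices in which every vertex has at most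
one earlier neighbour. -/
private lemma isAcyclic_of_orderCert {V : Type*} [Fintype V] [DecidableEq V] (G : SimpleGraph V)
    [DecidableRel G.Adj] (f : V → ℕ)
    (hf : ∀ v w, G.Adj v w → f v ≠ f w)
    (h1 : ∀ v : V, (univ.filter (fun w => G.Adj v w ∧ f w < f v)).card ≤ 1) : G.IsAcyclic := by
  intro u c hc
  obtain ⟨v, hv, hmax⟩ := Finset.exists_max_image c.support.toFinset f
    ⟨u, by simp [Walk.start_mem_support]⟩
  rw [List.mem_toFinset] at hv
  set c' := c.rotate v hv with hc'def
  have hmemc : ∀ w, w ∈ c'.support → w ∈ c.support := by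
    intro w hw
    rw [c'.support_eq_cons] at hw
    rcases List.mem_cons.mp hw with rfl | hw
    · exact hv
    · exact List.mem_of_mem_tail ((c.support_rotate v hv).mem_iff.mp hw)
  have hcy : c'.IsCycle := hc.rotate hv
  have hlen3 : 3 ≤ c'.length := hcy.three_le_length
  clear_value c'
  clear hc'def
  cases c' with
  | nil => exact Walk.IsCycle.not_of_nil hcy
  | cons h p =>
    rename_i x
    rw [Walk.cons_isCycle_iff] at hcy
    obtain ⟨hp, he⟩ := hcy
    rw [Walk.length_cons] at hlen3
    set q := p.reverse with hqdef
    have hq : q.IsPath := hp.reverse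
    have hql : 2 ≤ q.length := by rw [hqdef, Walk.length_reverse]; omega
    set y := q.getVert 1 with hydef
    have hyadj : G.Adj v y := Walk.adj_snd ((Walk.not_nil_iff_lt_length).mpr (by omega))
    have hymem : y ∈ c.support := by
      apply hmemc
      rw [Walk.support_cons]
      apply List.mem_cons_of_mem
      have : y ∈ q.support := getVert_one_mem_support q
      rwa [hqdef, Walk.support_reverse, List.mem_reverse] at this
    have hxmem : x ∈ c.support := by
      apply hmemc
      rw [Walk.support_cons]
      exact List.mem_cons_of_mem _ (Walk.start_mem_support _)
    have hxy : x ≠ y := by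
      intro hxyeq
      exact getVert_one_ne_end hq hql (by rw [← hydef, ← hxyeq])
    have hxlt : f x < f v := by
      have := hmax x (List.mem_toFinset.mpr hxmem)
      have := hf v x h
      omega
    have hylt : f y < f v := by
      have := hmax y (List.mem_toFinset.mpr hymem)
      have := hf v y hyadj
      omega
    have hsub : ({x, y} : Finset V) ⊆ univ.filter (fun w => G.Adj v w ∧ f w < f v) := by
      intro w hw
      simp only [Finset.mem_insert, Finset.mem_singleton] at hw
      rcases hw with rfl | rfl <;> simp [h, hyadj, hxlt, hylt]
    have hcard : 2 ≤ (univ.filter (fun w => G.Adj v w ∧ f w < f v)).card := by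
      calc 2 = ({x, y} : Finset V).card := by
            rw [Finset.card_insert_of_notMem (by simpa using hxy), Finset.card_singleton]
        _ ≤ _ := Finset.card_le_card hsub
    have := h1 v
    omega

open Finset in
/-- A finite acyclic graph on a nonempty vertex type has at most `card V - 1` edges. -/
private lemma acyclic_card_edgeFinset_add_one_le {V : Type*} [Fintype V] [Nonempty V]
    [DecidableEq V] (G : SimpleGraph V) [DecidableRel G.Adj] (hG : G.IsAcyclic) :
    G.edgeFinset.card + 1 ≤ Fintype.card V := by
  classical
  let root : V → V := fun v => Quot.out (G.connectedComponentMk v)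
  have hreach : ∀ v, G.Reachable v (root v) := by
    intro v
    have h : G.connectedComponentMk (root v) = G.connectedComponentMk v := Quot.out_eq _
    exact (ConnectedComponent.eq.mp h).symm
  have hrooteq : ∀ u v, G.Reachable u v → root u = root v := by
    intro u v h
    show Quot.out _ = Quot.out _
    rw [ConnectedComponent.sound h]
  let Pp : ∀ v, G.Path v (root v) := fun v => (hreach v).some.toPath
  let Pw : ∀ v, G.Walk v (root v) := fun v => (Pp v).1
  have hPpath : ∀ v, (Pw v).IsPath := fun v => (Pp v).2
  let parent : V → V := fun v => (Pw v).getVert 1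
  have key : ∀ u v, G.Adj u v →
      (parent u = v ∧ 1 ≤ (Pw u).length) ∨ (parent v = u ∧ 1 ≤ (Pw v).length) := by
    intro u v h
    have hr : root u = root v := hrooteq u v h.reachable
    by_cases hu : u ∈ (Pw v).support
    · right
      set t := (Pw v).takeUntil u hu with htdef
      set d := (Pw v).dropUntil u hu with hddef
      have ht : t.IsPath := (hPpath v).takeUntil hu
      have hsingle : (Walk.cons h.symm Walk.nil : G.Walk v u).IsPath := by
        simp [Walk.cons_isPath_iff, h.ne']
      have hts : t = Walk.cons h.symm Walk.nil := by
        have := hG.path_unique ⟨t, ht⟩ ⟨_, hsingle⟩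
        exact congrArg Subtype.val this
      have hPv : Pw v = Walk.cons h.symm d := by
        conv_lhs => rw [← (Pw v).take_spec hu]
        rw [← htdef, ← hddef, hts, Walk.cons_append, Walk.nil_append]
      constructor
      · show (Pw v).getVert 1 = u
        rw [hPv, Walk.getVert_cons_succ, Walk.getVert_zero]
      · rw [hPv, Walk.length_cons]; omega
    · left
      have hW : (Walk.cons h ((Pw v).copy rfl hr.symm)).IsPath := by
        rw [Walk.cons_isPath_iff]
        refine ⟨by simpa using hPpath v, by simpa using hu⟩
      have hPu : Pw u = Walk.cons h ((Pw v).copy rfl hr.symm) := by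
        have := hG.path_unique (Pp u) ⟨_, hW⟩
        exact congrArg Subtype.val this
      constructor
      · show (Pw u).getVert 1 = v
        rw [hPu, Walk.getVert_cons_succ, Walk.getVert_zero]
      · rw [hPu, Walk.length_cons]; omega
  have hlen0 : ∀ v, (Pw (root v)).length = 0 := by
    intro v
    have hrr : root (root v) = root v := hrooteq _ _ (hreach v).symm
    have hnil : (Pw (root v)).copy rfl hrr = Walk.nil := by
      rw [← Walk.isPath_iff_eq_nil, Walk.isPath_copy]
      exact hPpath _
    have := congrArg Walk.length hnil
    simpa using this
  obtain ⟨a⟩ := (inferInstance : Nonempty V)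
  set r0 := root a with hr0def
  have hne : ∀ w, 1 ≤ (Pw w).length → w ≠ r0 := by
    intro w hw hweq
    rw [hweq, hr0def] at hw
    rw [hlen0 a] at hw
    omega
  have hsub : G.edgeFinset ⊆ (univ.erase r0).image (fun w => s(w, parent w)) := by
    intro e he
    induction e with
    | h u v =>
      rw [mem_edgeFinset, mem_edgeSet] at he
      rcases key u v he with ⟨hp, hl⟩ | ⟨hp, hl⟩
      · exact Finset.mem_image.mpr ⟨u, Finset.mem_erase.mpr ⟨hne u hl, mem_univ u⟩, by rw [hp]⟩
      · exact Finset.mem_image.mpr ⟨v, Finset.mem_erase.mpr ⟨hne v hl, mem_univ v⟩,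
          by rw [hp, Sym2.eq_swap]⟩
  calc G.edgeFinset.card + 1 ≤ ((univ.erase r0).image (fun w => s(w, parent w))).card + 1 :=
        Nat.add_le_add_right (Finset.card_le_card hsub) 1
    _ ≤ (univ.erase r0).card + 1 := Nat.add_le_add_right Finset.card_image_le 1
    _ = Fintype.card V := by
        rw [Finset.card_erase_of_mem (mem_univ r0), Finset.card_univ]
        have : 1 ≤ Fintype.card V := Fintype.card_pos
        omega

instance : DecidableRel (cycleGraph 4 □ cycleGraph 4).Adj :=
  fun _ _ => decidable_of_iff _ (boxProd_adj).symm

private def decycS : Finset (Fin 4 × Fin 4) := {(0,0),(1,1),(1,3),(2,2),(3,1),(3,3)}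

private def decycSset : Set (Fin 4 × Fin 4) := fun x => x ∈ decycS

instance : DecidablePred (· ∈ decycSset) := fun x => inferInstanceAs (Decidable (x ∈ decycS))

instance : DecidablePred (· ∈ decycSsetᶜ) := fun x => inferInstanceAs (Decidable ¬(x ∈ decycS))

instance : DecidableRel ((cycleGraph 4 □ cycleGraph 4).induce decycSsetᶜ).Adj :=
  fun a b => inferInstanceAs (Decidable ((cycleGraph 4 □ cycleGraph 4).Adj a.1 b.1))

private lemma upper_mem :
    (cycleGraph 4 □ cycleGraph 4).IsDecyclingSet decycSset ∧ decycSset.ncard = 6 := by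
  constructor
  · show ((cycleGraph 4 □ cycleGraph 4).induce decycSsetᶜ).IsAcyclic
    apply isAcyclic_of_orderCert _ (fun x => (x.val.1 : ℕ) * 4 + (x.val.2 : ℕ))
    · decide
    · decide
  · have : decycSset = ↑decycS := rfl
    rw [this, Set.ncard_coe_finset]
    decide

open Finset in
private lemma lower_bound (S : Set (Fin 4 × Fin 4))
    (hS : (cycleGraph 4 □ cycleGraph 4).IsDecyclingSet S) : 6 ≤ S.ncard := by
  classical
  set G := cycleGraph 4 □ cycleGraph 4 with hGdef
  by_contra hlt
  push_neg at hlt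
  set T : Finset (Fin 4 × Fin 4) := S.toFinset with hTdef
  have hTcard : T.card = S.ncard := (Set.ncard_eq_toFinset_card' S).symm
  have hT5 : T.card ≤ 5 := by omega
  -- the induced graph on the complement
  set H := G.induce Sᶜ with hHdef
  have hdeg4 : ∀ v : Fin 4 × Fin 4, (G.neighborFinset v).card = 4 := by decide
  -- cardinality of the complement
  have hcompl : (Sᶜ).toFinset = univ \ T := by
    ext x
    simp [hTdef]
  have hc : Fintype.card ↥(Sᶜ) + T.card = 16 := by
    rw [← Set.toFinset_card, hcompl, Finset.card_sdiff_of_subset (subset_univ T), Finset.card_univ]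
    have h16 : Fintype.card (Fin 4 × Fin 4) = 16 := by simp
    have := Finset.card_le_univ T
    omega
  have hnonempty : Nonempty ↥(Sᶜ) := by
    rw [← Fintype.card_pos_iff]
    omega
  -- degree splitting
  have hsplit : ∀ w : ↥(Sᶜ), H.degree w + ((G.neighborFinset w.val) ∩ T).card = 4 := by
    intro w
    have himg : (H.neighborFinset w).image (Subtype.val) = (G.neighborFinset w.val) \ T := by
      ext b
      simp only [Finset.mem_image, mem_neighborFinset, Finset.mem_sdiff]
      constructor
      · rintro ⟨a, ha, rfl⟩
        have hadj : G.Adj w.val a.val := ha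
        refine ⟨hadj, ?_⟩
        have := a.2
        simp only [Set.mem_compl_iff] at this
        simpa [hTdef] using this
      · rintro ⟨hadj, hb⟩
        have hbS : b ∈ Sᶜ := by
          simp only [Set.mem_compl_iff]
          simpa [hTdef] using hb
        exact ⟨⟨b, hbS⟩, hadj, rfl⟩
    have hdegH : H.degree w = ((G.neighborFinset w.val) \ T).card := by
      rw [← himg, Finset.card_image_of_injective _ Subtype.val_injective]
      rfl
    rw [hdegH, Finset.card_sdiff_add_card_inter, hdeg4]
  -- handshake & sums
  set E := H.edgeFinset.card with hEdef
  have hhand : ∑ w : ↥(Sᶜ), H.degree w = 2 * E := H.sum_degrees_eq_twice_card_edges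
  have hsum1 : 2 * E + ∑ w : ↥(Sᶜ), ((G.neighborFinset w.val) ∩ T).card
      = 4 * Fintype.card ↥(Sᶜ) := by
    rw [← hhand, ← Finset.sum_add_distrib]
    rw [Finset.sum_congr rfl (fun w _ => hsplit w)]
    rw [Finset.sum_const, Finset.card_univ, smul_eq_mul, mul_comm]
  have hsum2 : ∑ w : ↥(Sᶜ), ((G.neighborFinset w.val) ∩ T).card
      ≤ ∑ v : Fin 4 × Fin 4, ((G.neighborFinset v) ∩ T).card := by
    rw [← Finset.sum_subtype (Sᶜ).toFinset (fun x => Set.mem_toFinset)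
      (fun v => ((G.neighborFinset v) ∩ T).card)]
    exact Finset.sum_le_sum_of_subset (subset_univ _)
  have hsum3 : ∑ v : Fin 4 × Fin 4, ((G.neighborFinset v) ∩ T).card = 4 * T.card := by
    have hstep : ∀ v : Fin 4 × Fin 4, ((G.neighborFinset v) ∩ T).card
        = ∑ u ∈ T, (if G.Adj v u then 1 else 0) := by
      intro v
      have : (G.neighborFinset v) ∩ T = T.filter (fun u => G.Adj v u) := by
        ext u
        simp [mem_neighborFinset, and_comm]
      rw [this, Finset.card_filter]
    rw [Finset.sum_congr rfl (fun v _ => hstep v), Finset.sum_comm]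
    have hinner : ∀ u : Fin 4 × Fin 4,
        ∑ v : Fin 4 × Fin 4, (if G.Adj v u then 1 else 0) = 4 := by
      intro u
      rw [← Finset.card_filter]
      have : (univ.filter (fun v => G.Adj v u)) = G.neighborFinset u := by
        ext v
        simp [mem_neighborFinset, adj_comm]
      rw [this]
      exact hdeg4 u
    rw [Finset.sum_congr rfl (fun u _ => hinner u), Finset.sum_const, smul_eq_mul, mul_comm]
  -- forest bound
  have hforest : E + 1 ≤ Fintype.card ↥(Sᶜ) :=
    acyclic_card_edgeFinset_add_one_le H hS
  omega

/-- `∇(C₄ □ C₄) = 6`. -/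
theorem decyclingNumber_C4_boxProd_C4 :
    (cycleGraph 4 □ cycleGraph 4).decyclingNumber = 6 := by
  have hmem : 6 ∈ {k | ∃ S : Set (Fin 4 × Fin 4),
      (cycleGraph 4 □ cycleGraph 4).IsDecyclingSet S ∧ S.ncard = k} :=
    ⟨decycSset, upper_mem⟩
  apply le_antisymm
  · exact Nat.sInf_le hmem
  · apply le_csInf ⟨6, hmem⟩
    rintro k ⟨S, hS, rfl⟩
    exact lower_bound S hS
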